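/- Let d ≥ 2 be an integer, r_a, r_b ∈ ℤ, and let (r_n)_{n≥0} be a sequence of integers which is periodic with period P ≥ 1 from index n₀ (i.e. r_{n+P} = r_n for all n ≥ n₀). Let (u_n), (v_n) be sequences of positive integers satisfying u_{n+1} = d·u_n + r_b − r_n and v_{n+1} = d·v_n − r_a + r_n for all n. Set R = ∑_{j=0}^{P−1} d^{P−1−j}·r_{n₀+j}, r_u = r_b·(1 + d + ⋯ + d^{P−1}) − R, and r_v = r_a·(1 + d + ⋯ + d^{P−1}) − R. If v_{n₀} − r_v/(d^P − 1) ≠ 0, then lim_{k→∞} u_{n₀+kP}/v_{n₀+kP} = (u_{n₀} + r_u/(d^P − 1))/(v_{n₀} − r_v/(d^P − 1)); in particular this limit is a rational number. -/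

import Mathlib

open Filter

/-- Let `d ≥ 2`, `r_a, r_b ∈ ℤ`, and let `(r_n)` be a sequence of integers which is periodic with
period `P ≥ 1` from index `n₀`. Let `(u_n)`, `(v_n)` be sequences of positive integers with
`u_{n+1} = d·u_n + r_b - r_n` and `v_{n+1} = d·v_n - r_a + r_n`. With
`R = ∑_{j<P} d^{P-1-j}·r_{n₀+j}`, `r_u = r_b·(1 + d + ⋯ + d^{P-1}) - R` and
`r_v = r_a·(1 + d + ⋯ + d^{P-1}) - R`, if `v_{n₀} - r_v/(d^P - 1) ≠ 0` then
`lim_{k→∞} u_{n₀+kP}/v_{n₀+kP} = (u_{n₀} + r_u/(d^P - 1))/(v_{n₀} - r_v/(d^P - 1))`,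
a rational number. -/
theorem statement19
    (d : ℕ) (hd : 2 ≤ d) (ra rb : ℤ)
    (n₀ P : ℕ) (hP : 0 < P)
    (r : ℕ → ℤ) (hper : ∀ n ≥ n₀, r (n + P) = r n)
    (u v : ℕ → ℕ) (hu : ∀ n, 0 < u n) (hv : ∀ n, 0 < v n)
    (hurec : ∀ n, (u (n + 1) : ℤ) = d * u n + rb - r n)
    (hvrec : ∀ n, (v (n + 1) : ℤ) = d * v n - ra + r n)
    (R : ℤ) (hR : R = ∑ j ∈ Finset.range P, (d : ℤ) ^ (P - 1 - j) * r (n₀ + j))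
    (ru rv : ℝ)
    (hru : ru = (rb : ℝ) * (∑ j ∈ Finset.range P, (d : ℝ) ^ j) - (R : ℝ))
    (hrv : rv = (ra : ℝ) * (∑ j ∈ Finset.range P, (d : ℝ) ^ j) - (R : ℝ))
    (hne : (v n₀ : ℝ) - rv / ((d : ℝ) ^ P - 1) ≠ 0) :
    Filter.Tendsto (fun k => (u (n₀ + k * P) : ℝ) / (v (n₀ + k * P) : ℝ)) Filter.atTop
      (nhds (((u n₀ : ℝ) + ru / ((d : ℝ) ^ P - 1)) / ((v n₀ : ℝ) - rv / ((d : ℝ) ^ P - 1))))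
    ∧ ∃ L : ℚ,
        ((u n₀ : ℝ) + ru / ((d : ℝ) ^ P - 1)) / ((v n₀ : ℝ) - rv / ((d : ℝ) ^ P - 1))
          = (L : ℝ) := by
  have hd1 : (1 : ℝ) < (d : ℝ) := by exact_mod_cast lt_of_lt_of_le one_lt_two (by exact_mod_cast hd)
  set q : ℝ := (d : ℝ) ^ P with hqdef
  have hq1 : 1 < q := one_lt_pow₀ hd1 hP.ne'
  have hq0 : (0 : ℝ) < q := lt_trans one_pos hq1
  have hqm : (0 : ℝ) < q - 1 := sub_pos.2 hq1
  -- general iteration of the recurrences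
  have hustep : ∀ m t, (u (m + t) : ℤ) =
      d ^ t * u m + ∑ j ∈ Finset.range t, (d : ℤ) ^ (t - 1 - j) * (rb - r (m + j)) := by
    intro m t
    induction t with
    | zero => simp
    | succ t ih =>
      have : m + (t + 1) = (m + t) + 1 := by ring
      rw [this, hurec (m + t), ih, Finset.sum_range_succ]
      have hsum : ∑ j ∈ Finset.range t, (d : ℤ) ^ (t + 1 - 1 - j) * (rb - r (m + j))
          = (d : ℤ) * ∑ j ∈ Finset.range t, (d : ℤ) ^ (t - 1 - j) * (rb - r (m + j)) := by
        rw [Finset.mul_sum]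
        refine Finset.sum_congr rfl fun j hj => ?_
        have hjt : j < t := Finset.mem_range.1 hj
        have he : t + 1 - 1 - j = (t - 1 - j) + 1 := by omega
        rw [he, pow_succ]
        ring
      rw [hsum]
      have he2 : t + 1 - 1 - t = 0 := by omega
      rw [he2]
      push_cast
      ring
  have hvstep : ∀ m t, (v (m + t) : ℤ) =
      d ^ t * v m + ∑ j ∈ Finset.range t, (d : ℤ) ^ (t - 1 - j) * (- ra + r (m + j)) := by
    intro m t
    induction t with
    | zero => simp
    | succ t ih =>
      have : m + (t + 1) = (m + t) + 1 := by ring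
      rw [this, hvrec (m + t), ih, Finset.sum_range_succ]
      have hsum : ∑ j ∈ Finset.range t, (d : ℤ) ^ (t + 1 - 1 - j) * (- ra + r (m + j))
          = (d : ℤ) * ∑ j ∈ Finset.range t, (d : ℤ) ^ (t - 1 - j) * (- ra + r (m + j)) := by
        rw [Finset.mul_sum]
        refine Finset.sum_congr rfl fun j hj => ?_
        have hjt : j < t := Finset.mem_range.1 hj
        have he : t + 1 - 1 - j = (t - 1 - j) + 1 := by omega
        rw [he, pow_succ]
        ring
      rw [hsum]
      have he2 : t + 1 - 1 - t = 0 := by omega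
      rw [he2]
      push_cast
      ring
  -- periodicity iterated
  have hrk : ∀ k j, r (n₀ + k * P + j) = r (n₀ + j) := by
    intro k
    induction k with
    | zero => intro j; simp
    | succ k ih =>
      intro j
      have : n₀ + (k + 1) * P + j = (n₀ + k * P + j) + P := by ring
      rw [this, hper _ (by omega)]
      exact ih j
  -- sum of reflected powers
  have hrefl : ∑ j ∈ Finset.range P, (d : ℝ) ^ (P - 1 - j) = ∑ j ∈ Finset.range P, (d : ℝ) ^ j :=
    Finset.sum_range_reflect (fun j => (d : ℝ) ^ j) P
  -- one-period step over the reals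
  have huP : ∀ k, (u (n₀ + (k + 1) * P) : ℝ) = q * (u (n₀ + k * P) : ℝ) + ru := by
    intro k
    have h := hustep (n₀ + k * P) P
    have hcast : (u (n₀ + k * P + P) : ℝ) =
        (d : ℝ) ^ P * (u (n₀ + k * P) : ℝ) +
          ∑ j ∈ Finset.range P, (d : ℝ) ^ (P - 1 - j) * ((rb : ℝ) - (r (n₀ + k * P + j) : ℝ)) := by
      exact_mod_cast congrArg (fun z : ℤ => (z : ℝ)) h
    have hidx : n₀ + (k + 1) * P = n₀ + k * P + P := by ring
    rw [hidx, hcast]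
    have : ∑ j ∈ Finset.range P, (d : ℝ) ^ (P - 1 - j) * ((rb : ℝ) - (r (n₀ + k * P + j) : ℝ)) = ru := by
      have hsplit : ∑ j ∈ Finset.range P, (d : ℝ) ^ (P - 1 - j) * ((rb : ℝ) - (r (n₀ + k * P + j) : ℝ))
          = (rb : ℝ) * ∑ j ∈ Finset.range P, (d : ℝ) ^ (P - 1 - j)
            - ∑ j ∈ Finset.range P, (d : ℝ) ^ (P - 1 - j) * (r (n₀ + j) : ℝ) := by
        rw [Finset.mul_sum, ← Finset.sum_sub_distrib]
        refine Finset.sum_congr rfl fun j hj => ?_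
        rw [hrk k j]
        ring
      rw [hsplit, hrefl, hru]
      have : ((R : ℤ) : ℝ) = ∑ j ∈ Finset.range P, (d : ℝ) ^ (P - 1 - j) * (r (n₀ + j) : ℝ) := by
        rw [hR]; push_cast; rfl
      rw [← this]
    rw [this, hqdef]
  have hvP : ∀ k, (v (n₀ + (k + 1) * P) : ℝ) = q * (v (n₀ + k * P) : ℝ) - rv := by
    intro k
    have h := hvstep (n₀ + k * P) P
    have hcast : (v (n₀ + k * P + P) : ℝ) =
        (d : ℝ) ^ P * (v (n₀ + k * P) : ℝ) +
          ∑ j ∈ Finset.range P, (d : ℝ) ^ (P - 1 - j) * (-(ra : ℝ) + (r (n₀ + k * P + j) : ℝ)) := by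
      exact_mod_cast congrArg (fun z : ℤ => (z : ℝ)) h
    have hidx : n₀ + (k + 1) * P = n₀ + k * P + P := by ring
    rw [hidx, hcast]
    have : ∑ j ∈ Finset.range P, (d : ℝ) ^ (P - 1 - j) * (-(ra : ℝ) + (r (n₀ + k * P + j) : ℝ)) = -rv := by
      have hsplit : ∑ j ∈ Finset.range P, (d : ℝ) ^ (P - 1 - j) * (-(ra : ℝ) + (r (n₀ + k * P + j) : ℝ))
          = -(ra : ℝ) * (∑ j ∈ Finset.range P, (d : ℝ) ^ (P - 1 - j))
            + ∑ j ∈ Finset.range P, (d : ℝ) ^ (P - 1 - j) * (r (n₀ + j) : ℝ) := by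
        rw [Finset.mul_sum, ← Finset.sum_add_distrib]
        refine Finset.sum_congr rfl fun j hj => ?_
        rw [hrk k j]
        ring
      rw [hsplit, hrefl, hrv]
      have : ((R : ℤ) : ℝ) = ∑ j ∈ Finset.range P, (d : ℝ) ^ (P - 1 - j) * (r (n₀ + j) : ℝ) := by
        rw [hR]; push_cast; rfl
      rw [← this]
      ring
    rw [this, hqdef]
    ring
  -- closed forms
  set A : ℝ := (u n₀ : ℝ) + ru / (q - 1) with hA
  set B : ℝ := (v n₀ : ℝ) - rv / (q - 1) with hB
  have hkey : ∀ k, (u (n₀ + k * P) : ℝ) = q ^ k * A - ru / (q - 1)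
      ∧ (v (n₀ + k * P) : ℝ) = q ^ k * B + rv / (q - 1) := by
    intro k
    induction k with
    | zero => constructor <;> (simp [hA, hB]; try ring)
    | succ k ih =>
      obtain ⟨ihu, ihv⟩ := ih
      constructor
      · rw [huP k, ihu, pow_succ]
        field_simp
        ring
      · rw [hvP k, ihv, pow_succ]
        field_simp
        ring
  have hqk0 : ∀ k : ℕ, q ^ k ≠ 0 := fun k => pow_ne_zero k (ne_of_gt hq0)
  -- rewrite terms of the sequence
  have heq : ∀ k, (u (n₀ + k * P) : ℝ) / (v (n₀ + k * P) : ℝ)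
      = (A - (ru / (q - 1)) * (1 / q) ^ k) / (B + (rv / (q - 1)) * (1 / q) ^ k) := by
    intro k
    rw [(hkey k).1, (hkey k).2]
    have h1 : q ^ k * A - ru / (q - 1) = (A - (ru / (q - 1)) * (1 / q) ^ k) * q ^ k := by
      field_simp
      have hk : q ^ k * q⁻¹ ^ k = 1 := by rw [← mul_pow, mul_inv_cancel₀ (ne_of_gt hq0), one_pow]
      linear_combination ru * hk
    have h2 : q ^ k * B + rv / (q - 1) = (B + (rv / (q - 1)) * (1 / q) ^ k) * q ^ k := by
      field_simp
      have hk : q ^ k * q⁻¹ ^ k = 1 := by rw [← mul_pow, mul_inv_cancel₀ (ne_of_gt hq0), one_pow]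
      linear_combination (-rv) * hk
    rw [h1, h2, mul_div_mul_right _ _ (hqk0 k)]
  have hlim0 : Tendsto (fun k : ℕ => (1 / q) ^ k) atTop (nhds 0) := by
    apply tendsto_pow_atTop_nhds_zero_of_lt_one
    · positivity
    · rw [div_lt_one hq0]; exact hq1
  have hlim : Tendsto (fun k => (A - (ru / (q - 1)) * (1 / q) ^ k) / (B + (rv / (q - 1)) * (1 / q) ^ k))
      atTop (nhds (A / B)) := by
    have hnum : Tendsto (fun k : ℕ => A - (ru / (q - 1)) * (1 / q) ^ k) atTop (nhds A) := by
      have := (tendsto_const_nhds (x := A) (f := atTop)).sub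
        ((tendsto_const_nhds (x := ru / (q - 1)) (f := atTop)).mul hlim0)
      simpa using this
    have hden : Tendsto (fun k : ℕ => B + (rv / (q - 1)) * (1 / q) ^ k) atTop (nhds B) := by
      have := (tendsto_const_nhds (x := B) (f := atTop)).add
        ((tendsto_const_nhds (x := rv / (q - 1)) (f := atTop)).mul hlim0)
      simpa using this
    exact hnum.div hden hne
  refine ⟨hlim.congr fun k => (heq k).symm, ?_⟩
  -- rationality
  have hsum : (∑ j ∈ Finset.range P, (d : ℝ) ^ j) = ((∑ j ∈ Finset.range P, (d : ℤ) ^ j : ℤ) : ℝ) := by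
    push_cast
    rfl
  set Ru : ℤ := rb * ∑ j ∈ Finset.range P, (d : ℤ) ^ j - R with hRu
  set Rv : ℤ := ra * ∑ j ∈ Finset.range P, (d : ℤ) ^ j - R with hRv
  refine ⟨((u n₀ : ℚ) + (Ru : ℚ) / ((d : ℚ) ^ P - 1)) / ((v n₀ : ℚ) - (Rv : ℚ) / ((d : ℚ) ^ P - 1)), ?_⟩
  rw [hA, hB, hru, hrv, hsum, hRu, hRv, hqdef]
  push_cast
  ring
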